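/- The reduced Suslov equations dΩ₁/dt = -(1/I₁₁)(I₁₃Ω₁ + I₂₃Ω₂ + B₃)Ω₂, dΩ₂/dt = (1/I₂₂)(I₁₃Ω₁ + I₂₃Ω₂ + B₃)Ω₁ are Hamiltonian with respect to the bracket on ℝ² defined by {F,G} = π(Ω)(∂F/∂Ω₁ ∂G/∂Ω₂ - ∂F/∂Ω₂ ∂G/∂Ω₁) with π(Ω) = -(I₁₃Ω₁ + I₂₃Ω₂ + B₃)/(I₁₁ I₂₂) and Hamiltonian H = (1/2)(I₁₁Ω₁² + I₂₂Ω₂²): explicitly, {Ω₁, H} and {Ω₂, H} equal the right-hand sides of the equations. -/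

import Mathlib

/-- The bracket on ℝ² defined by a bivector `π`:
`{F,G}(x) = π(x) (∂F/∂x₁ ∂G/∂x₂ - ∂F/∂x₂ ∂G/∂x₁)`. -/
noncomputable def pb (π F G : (Fin 2 → ℝ) → ℝ) (x : Fin 2 → ℝ) : ℝ :=
  π x * (fderiv ℝ F x (Pi.single 0 1) * fderiv ℝ G x (Pi.single 1 1)
    - fderiv ℝ F x (Pi.single 1 1) * fderiv ℝ G x (Pi.single 0 1))

lemma fderiv_coord (i : Fin 2) (x : Fin 2 → ℝ) :
    fderiv ℝ (fun y : Fin 2 → ℝ => y i) x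
      = (ContinuousLinearMap.proj i : (Fin 2 → ℝ) →L[ℝ] ℝ) :=
  (ContinuousLinearMap.proj i : (Fin 2 → ℝ) →L[ℝ] ℝ).fderiv

lemma hasFDerivH (I11 I22 : ℝ) (x : Fin 2 → ℝ) :
    HasFDerivAt (fun y : Fin 2 → ℝ => (1 / 2) * (I11 * (y 0) ^ 2 + I22 * (y 1) ^ 2))
      ((I11 * x 0) • (ContinuousLinearMap.proj 0 : (Fin 2 → ℝ) →L[ℝ] ℝ)
        + (I22 * x 1) • (ContinuousLinearMap.proj 1 : (Fin 2 → ℝ) →L[ℝ] ℝ)) x := by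
  have h0 : HasFDerivAt (fun y : Fin 2 → ℝ => y 0)
      (ContinuousLinearMap.proj 0 : (Fin 2 → ℝ) →L[ℝ] ℝ) x :=
    (ContinuousLinearMap.proj 0 : (Fin 2 → ℝ) →L[ℝ] ℝ).hasFDerivAt
  have h1 : HasFDerivAt (fun y : Fin 2 → ℝ => y 1)
      (ContinuousLinearMap.proj 1 : (Fin 2 → ℝ) →L[ℝ] ℝ) x :=
    (ContinuousLinearMap.proj 1 : (Fin 2 → ℝ) →L[ℝ] ℝ).hasFDerivAt
  have hsq0 := ((h0.mul h0).const_mul I11)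
  have hsq1 := ((h1.mul h1).const_mul I22)
  have hsum := (hsq0.add hsq1).const_mul (1 / 2)
  simp only [pow_two]
  refine hsum.congr_fderiv ?_
  ext v
  simp [ContinuousLinearMap.smul_apply]
  ring

/-- The reduced Suslov equations are Hamiltonian with respect to the bracket
defined by `π(Ω) = -(I₁₃Ω₁+I₂₃Ω₂+B₃)/(I₁₁I₂₂)` and Hamiltonian
`H = ½(I₁₁Ω₁²+I₂₂Ω₂²)`: `{Ω₁,H}` and `{Ω₂,H}` equal the right-hand sides of the
equations of motion. -/
theorem stmt3 (I11 I22 I13 I23 B3 : ℝ) (h1 : 0 < I11) (h2 : 0 < I22)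
    (π H : (Fin 2 → ℝ) → ℝ)
    (hπ : ∀ x, π x = -(I13 * x 0 + I23 * x 1 + B3) / (I11 * I22))
    (hH : ∀ x, H x = (1 / 2) * (I11 * (x 0) ^ 2 + I22 * (x 1) ^ 2)) :
    ∀ x, pb π (fun y => y 0) H x = -(1 / I11) * (I13 * x 0 + I23 * x 1 + B3) * x 1
      ∧ pb π (fun y => y 1) H x = (1 / I22) * (I13 * x 0 + I23 * x 1 + B3) * x 0 := by
  intro x
  have hHfun : H = fun y : Fin 2 → ℝ => (1 / 2) * (I11 * (y 0) ^ 2 + I22 * (y 1) ^ 2) :=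
    funext hH
  have hdH : fderiv ℝ H x
      = (I11 * x 0) • (ContinuousLinearMap.proj 0 : (Fin 2 → ℝ) →L[ℝ] ℝ)
        + (I22 * x 1) • (ContinuousLinearMap.proj 1 : (Fin 2 → ℝ) →L[ℝ] ℝ) := by
    rw [hHfun]
    exact (hasFDerivH I11 I22 x).fderiv
  have e00 : (Pi.single 0 1 : Fin 2 → ℝ) 0 = 1 := by simp
  have e01 : (Pi.single 0 1 : Fin 2 → ℝ) 1 = 0 := by simp [Pi.single_eq_of_ne]
  have e10 : (Pi.single 1 1 : Fin 2 → ℝ) 0 = 0 := by simp [Pi.single_eq_of_ne]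
  have e11 : (Pi.single 1 1 : Fin 2 → ℝ) 1 = 1 := by simp
  constructor <;>
  · unfold pb
    rw [hdH, fderiv_coord, hπ x]
    simp only [ContinuousLinearMap.add_apply, ContinuousLinearMap.smul_apply,
      ContinuousLinearMap.proj_apply, smul_eq_mul, e00, e01, e10, e11]
    field_simp
    ring
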